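/- (Theorem 1(iii), lower tail bound.) Suppose ω(x) = x and f is unimodal, i.e. nonincreasing on [0,∞). Then for every L > 0 and every λ with |λ| ≥ L, the BTV(1,1) prior satisfies π(λ) = 2 ∫_0^∞ x f(x) g(λ x) dx ≥ (2/λ²) ∫_0^∞ u f(u/L) g(u) du. Combined with the upper bound, the tails of π are of order O(|λ|^{−2}). -/

import Mathlib

open MeasureTheory Real

/-- Theorem 1(iii), lower tail bound: with ω(x) = x and f
unimodal (nonincreasing on [0,∞)), for every L > 0 and |λ| ≥ L the BTV(1,1)
prior satisfies π(λ) ≥ (2/λ²) ∫_0^∞ u f(u/L) g(u) du. -/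
theorem BTV_one_one_lower_tail_bound
    (f g : ℝ → ℝ)
    (hf_meas : Measurable f) (hf_nonneg : ∀ x, 0 ≤ f x)
    (hf_int : Integrable f) (hf_one : ∫ x, f x = 1)
    (hf_even : ∀ x, f (-x) = f x)
    (hf_anti : AntitoneOn f (Set.Ici 0))
    (hg_meas : Measurable g) (hg_nonneg : ∀ t, 0 ≤ g t)
    (hg_int : Integrable g) (hg_one : ∫ t, g t = 1)
    (hg_even : ∀ t, g (-t) = g t)
    (hg_bdd : ∃ C : ℝ, ∀ t, g t ≤ C)
    (hug_int : IntegrableOn (fun u => u * g u) (Set.Ioi 0))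
    (L : ℝ) (hL : 0 < L) (l : ℝ) (hl : L ≤ |l|) :
    (2 / l ^ 2) * ∫ u in Set.Ioi (0 : ℝ), u * f (u / L) * g u
      ≤ 2 * ∫ x in Set.Ioi (0 : ℝ), x * f x * g (l * x) := by
  set c := |l| with hc_def
  have hc : 0 < c := lt_of_lt_of_le hL hl
  have hgcl : ∀ x : ℝ, g (c * x) = g (l * x) := by
    intro x
    rcases abs_cases l with ⟨h, _⟩ | ⟨h, _⟩
    · rw [hc_def, h]
    · rw [hc_def, h, neg_mul, hg_even]
  -- change of variables
  have hsub : (∫ u in Set.Ioi (0 : ℝ), u * f (u / L) * g u)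
      = c * ∫ x in Set.Ioi (0 : ℝ), (c * x) * f ((c * x) / L) * g (c * x) := by
    rw [integral_comp_mul_left_Ioi (fun u => u * f (u / L) * g u) 0 hc, mul_zero,
      smul_eq_mul, ← mul_assoc, mul_inv_cancel₀ hc.ne', one_mul]
  -- integrability of dominating function
  have hdom : IntegrableOn (fun x => x * g (c * x)) (Set.Ioi (0 : ℝ)) := by
    have h1 : IntegrableOn (fun x => (c * x) * g (c * x)) (Set.Ioi (0 : ℝ)) := by
      have h := (integrableOn_Ioi_comp_mul_left_iff (fun u => u * g u) 0 hc).mpr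
      rw [mul_zero] at h
      exact h hug_int
    have h2 := h1.const_mul c⁻¹
    refine h2.congr ?_
    filter_upwards [ae_restrict_mem measurableSet_Ioi] with x hx
    field_simp
  have hf0 : ∀ x : ℝ, 0 ≤ x → f x ≤ f 0 := fun x hx =>
    hf_anti (Set.self_mem_Ici) hx hx
  -- integrability of LHS integrand
  have hintA : IntegrableOn (fun x => x * f ((c * x) / L) * g (c * x)) (Set.Ioi (0 : ℝ)) := by
    refine Integrable.mono' (hdom.const_mul (f 0)) ?_ ?_
    · exact (((measurable_id.mul ((hf_meas.comp ((measurable_const_mul c).div_const L)))).mul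
        (hg_meas.comp (measurable_const_mul c))).aestronglyMeasurable)
    · filter_upwards [ae_restrict_mem measurableSet_Ioi] with x hx
      have hx0 : (0:ℝ) ≤ x := (Set.mem_Ioi.mp hx).le
      have h1 : 0 ≤ x * f ((c*x)/L) * g (c*x) :=
        mul_nonneg (mul_nonneg hx0 (hf_nonneg _)) (hg_nonneg _)
      rw [Real.norm_eq_abs, abs_of_nonneg h1]
      have : f ((c*x)/L) ≤ f 0 := hf0 _ (by positivity)
      calc x * f ((c*x)/L) * g (c*x) ≤ x * f 0 * g (c*x) := by
            apply mul_le_mul_of_nonneg_right _ (hg_nonneg _)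
            exact mul_le_mul_of_nonneg_left this hx0
        _ = f 0 * (x * g (c*x)) := by ring
  -- integrability of RHS integrand
  have hintB : IntegrableOn (fun x => x * f x * g (l * x)) (Set.Ioi (0 : ℝ)) := by
    refine Integrable.mono' (hdom.const_mul (f 0)) ?_ ?_
    · exact (((measurable_id.mul hf_meas).mul
        (hg_meas.comp (measurable_const_mul l))).aestronglyMeasurable)
    · filter_upwards [ae_restrict_mem measurableSet_Ioi] with x hx
      have hx0 : (0:ℝ) ≤ x := (Set.mem_Ioi.mp hx).le
      have h1 : 0 ≤ x * f x * g (l*x) :=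
        mul_nonneg (mul_nonneg hx0 (hf_nonneg _)) (hg_nonneg _)
      rw [Real.norm_eq_abs, abs_of_nonneg h1, ← hgcl]
      calc x * f x * g (c*x) ≤ x * f 0 * g (c*x) := by
            apply mul_le_mul_of_nonneg_right _ (hg_nonneg _)
            exact mul_le_mul_of_nonneg_left (hf0 x hx0) hx0
        _ = f 0 * (x * g (c*x)) := by ring
  -- main comparison
  have hmono : (∫ x in Set.Ioi (0 : ℝ), x * f ((c * x) / L) * g (c * x))
      ≤ ∫ x in Set.Ioi (0 : ℝ), x * f x * g (l * x) := by
    refine setIntegral_mono_on hintA hintB measurableSet_Ioi ?_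
    intro x hx
    have hx0 : (0:ℝ) < x := Set.mem_Ioi.mp hx
    have hle : x ≤ (c * x) / L := by
      rw [le_div_iff₀ hL]
      calc x * L = L * x := by ring
        _ ≤ c * x := mul_le_mul_of_nonneg_right hl hx0.le
    have hfle : f ((c * x) / L) ≤ f x :=
      hf_anti hx0.le (le_trans hx0.le hle) hle
    rw [← hgcl]
    apply mul_le_mul_of_nonneg_right _ (hg_nonneg _)
    exact mul_le_mul_of_nonneg_left hfle hx0.le
  -- pull out constants
  have hpull : (∫ x in Set.Ioi (0 : ℝ), (c * x) * f ((c * x) / L) * g (c * x))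
      = c * ∫ x in Set.Ioi (0 : ℝ), x * f ((c * x) / L) * g (c * x) := by
    rw [← MeasureTheory.integral_const_mul]
    congr 1; ext x; ring
  have hl2 : l ^ 2 = c ^ 2 := (sq_abs l).symm
  rw [hsub, hpull, hl2]
  have hc2 : (0:ℝ) < c ^ 2 := by positivity
  calc 2 / c ^ 2 * (c * (c * ∫ x in Set.Ioi (0:ℝ), x * f ((c*x)/L) * g (c*x)))
      = 2 * ∫ x in Set.Ioi (0:ℝ), x * f ((c*x)/L) * g (c*x) := by
        field_simp
    _ ≤ 2 * ∫ x in Set.Ioi (0:ℝ), x * f x * g (l*x) := by linarith
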